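/- arXiv:1404.0386 — 2 statements merged into one kernel-verified Lean document; each statement's English description precedes it below -/
import Mathlib

section
/- Let x ∈ I have continued fraction coefficients (a_j)_{j≥1}, let n ≥ 1 and let y ∈ I_n(x) \ I_{n+1}(x). Then there exists j_0 ∈ {n+2, n+3} such that |x − y| ≥ 1 / ( 2 (a_{j_0}+2)² ∏_{1 ≤ j ≤ n+3, j ≠ j_0} (a_j+1)² ). -/
open Filter Finset MeasureTheory Topology

/-- `qden a n` is the denominator `q_n` of the continued fraction with partial
quotients `a_1 = a 0, a_2 = a 1, …` (0-indexed sequence `a`), defined by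
`q_0 = 1`, `q_1 = a_1`, `q_n = a_n q_{n-1} + q_{n-2}`. -/
def qden (a : ℕ → ℕ+) : ℕ → ℕ
  | 0 => 1
  | 1 => a 0
  | (n+2) => (a (n+1) : ℕ) * qden a (n+1) + qden a n

/-- `pnum a n` is the numerator `p_n`, defined by `p_0 = 0`, `p_1 = 1`,
`p_n = a_n p_{n-1} + p_{n-2}`. -/
def pnum (a : ℕ → ℕ+) : ℕ → ℕ
  | 0 => 0
  | 1 => 1
  | (n+2) => (a (n+1) : ℕ) * pnum a (n+1) + pnum a n

/-- The value `[a_1, a_2, …]` of the infinite continued fraction with partial quotients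
`a_1 = a 0, a_2 = a 1, …`, i.e. the limit of the convergents `p_n / q_n` (which always
exists). -/
noncomputable def cfVal (a : ℕ → ℕ+) : ℝ :=
  limUnder atTop (fun n => (pnum a n : ℝ) / (qden a n : ℝ))


namespace CFAux
variable (b : ℕ → ℕ+)

lemma qden_pos : ∀ m, 0 < qden b m
  | 0 => Nat.one_pos
  | 1 => (b 0).pos
  | (m+2) => by
      have h1 := qden_pos (m+1)
      have h2 := qden_pos m
      simp only [qden]
      positivity

lemma qden_le_succ : ∀ m, qden b m ≤ qden b (m+1)
  | 0 => by
      show qden b 0 ≤ qden b 1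
      have : 1 ≤ (b 0 : ℕ) := (b 0).one_le
      simpa [qden] using this
  | (m+1) => by
      have h := qden_pos b m
      have h1 := (b (m+1)).one_le
      calc qden b (m+1) = 1 * qden b (m+1) := (one_mul _).symm
        _ ≤ (b (m+1) : ℕ) * qden b (m+1) + qden b m := by
            have : (1:ℕ) ≤ (b (m+1) : ℕ) := h1
            nlinarith [qden_pos b (m+1)]
        _ = qden b (m+2) := rfl

lemma le_two_mul_qden : ∀ m, m ≤ 2 * qden b m
  | 0 => by simp
  | 1 => by
      have : 1 ≤ (b 0 : ℕ) := (b 0).one_le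
      show 1 ≤ 2 * qden b 1
      simp only [qden]; omega
  | (m+2) => by
      have ih := le_two_mul_qden m
      have h1 := qden_pos b (m+1)
      have h2 : 1 ≤ (b (m+1) : ℕ) := (b (m+1)).one_le
      have : qden b (m+2) = (b (m+1) : ℕ) * qden b (m+1) + qden b m := rfl
      nlinarith

lemma qden_le_prod : ∀ m, qden b m ≤ ∏ j ∈ Finset.range m, ((b j : ℕ) + 1)
  | 0 => le_refl 1
  | 1 => by simp [qden]
  | (m+2) => by
      have ih1 := qden_le_prod (m+1)
      have hmono := qden_le_succ b m
      have : qden b (m+2) = (b (m+1) : ℕ) * qden b (m+1) + qden b m := rfl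
      rw [this, Finset.prod_range_succ]
      calc (b (m+1) : ℕ) * qden b (m+1) + qden b m
          ≤ (b (m+1) : ℕ) * qden b (m+1) + qden b (m+1) := by omega
        _ = qden b (m+1) * ((b (m+1) : ℕ) + 1) := by ring
        _ ≤ (∏ j ∈ Finset.range (m+1), ((b j : ℕ) + 1)) * ((b (m+1) : ℕ) + 1) :=
            Nat.mul_le_mul_right _ ih1

lemma det : ∀ m, (pnum b (m+1) : ℤ) * qden b m - (pnum b m : ℤ) * qden b (m+1) = (-1)^m
  | 0 => by simp [pnum, qden]
  | (m+1) => by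
      have ih := det m
      have hp : (pnum b (m+2) : ℤ) = (b (m+1) : ℤ) * pnum b (m+1) + pnum b m := by
        push_cast [pnum]; ring
      have hq : (qden b (m+2) : ℤ) = (b (m+1) : ℤ) * qden b (m+1) + qden b m := by
        push_cast [qden]; ring
      rw [hp, hq, pow_succ]
      ring_nf
      ring_nf at ih
      linarith

lemma det2 (m : ℕ) :
    (pnum b (m+2) : ℤ) * qden b m - (pnum b m : ℤ) * qden b (m+2) = (b (m+1) : ℤ) * (-1)^m := by
  have ih := det b m
  have hp : (pnum b (m+2) : ℤ) = (b (m+1) : ℤ) * pnum b (m+1) + pnum b m := by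
    push_cast [pnum]; ring
  have hq : (qden b (m+2) : ℤ) = (b (m+1) : ℤ) * qden b (m+1) + qden b m := by
    push_cast [qden]; ring
  rw [hp, hq]; ring_nf; ring_nf at ih; nlinarith [ih]

end CFAux

namespace CFAux
variable (b : ℕ → ℕ+)

noncomputable def g (m : ℕ) : ℝ := (pnum b m : ℝ) / (qden b m : ℝ)

lemma qden_pos' (m : ℕ) : (0:ℝ) < (qden b m : ℝ) := by exact_mod_cast qden_pos b m

lemma g_succ_sub (m : ℕ) :
    g b (m+1) - g b m = (-1)^m / ((qden b m : ℝ) * qden b (m+1)) := by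
  have h := det b m
  have h1 := qden_pos' b m
  have h2 := qden_pos' b (m+1)
  have h' : (pnum b (m+1) : ℝ) * qden b m - (pnum b m : ℝ) * qden b (m+1) = (-1)^m := by
    exact_mod_cast h
  unfold g
  field_simp
  linear_combination h'

lemma g_two_sub (m : ℕ) :
    g b (m+2) - g b m = (-1)^m * (b (m+1) : ℝ) / ((qden b m : ℝ) * qden b (m+2)) := by
  have h := det2 b m
  have h1 := qden_pos' b m
  have h2 := qden_pos' b (m+2)
  have h' : (pnum b (m+2) : ℝ) * qden b m - (pnum b m : ℝ) * qden b (m+2)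
      = (b (m+1) : ℝ) * (-1)^m := by exact_mod_cast h
  unfold g
  field_simp
  linear_combination h'

lemma even_mono : Monotone (fun k => g b (2*k)) := by
  apply monotone_nat_of_le_succ
  intro k
  have h := g_two_sub b (2*k)
  have h1 := qden_pos' b (2*k)
  have h2 := qden_pos' b (2*k+2)
  have hb : (0:ℝ) < (b (2*k+1) : ℝ) := by exact_mod_cast (b (2*k+1)).pos
  have : g b (2*(k+1)) - g b (2*k) = (b (2*k+1) : ℝ) / ((qden b (2*k) : ℝ) * qden b (2*k+2)) := by
    have : ((-1:ℝ))^(2*k) = 1 := by simp [pow_mul]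
    rw [show 2*(k+1) = 2*k+2 by ring, g_two_sub, this, one_mul]
  nlinarith [div_pos hb (mul_pos h1 h2)]

lemma odd_anti : Antitone (fun k => g b (2*k+1)) := by
  apply antitone_nat_of_succ_le
  intro k
  have h := g_two_sub b (2*k+1)
  have h1 := qden_pos' b (2*k+1)
  have h2 := qden_pos' b (2*k+3)
  have hb : (0:ℝ) < (b (2*k+2) : ℝ) := by exact_mod_cast (b (2*k+2)).pos
  have hsign : ((-1:ℝ))^(2*k+1) = -1 := by simp [pow_succ, pow_mul]
  have : g b (2*(k+1)+1) - g b (2*k+1)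
      = -((b (2*k+2) : ℝ) / ((qden b (2*k+1) : ℝ) * qden b (2*k+3))) := by
    rw [show 2*(k+1)+1 = (2*k+1)+2 by ring, g_two_sub, hsign]; ring
  nlinarith [div_pos hb (mul_pos h1 h2)]

lemma even_lt_odd_same (k : ℕ) : g b (2*k) ≤ g b (2*k+1) := by
  have h := g_succ_sub b (2*k)
  have h1 := qden_pos' b (2*k)
  have h2 := qden_pos' b (2*k+1)
  have hsign : ((-1:ℝ))^(2*k) = 1 := by simp [pow_mul]
  rw [hsign] at h
  nlinarith [div_pos (one_pos) (mul_pos h1 h2), one_div_pos.mpr (mul_pos h1 h2)]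

lemma even_le_odd (i j : ℕ) : g b (2*i) ≤ g b (2*j+1) := by
  calc g b (2*i) ≤ g b (2*(max i j)) := even_mono b (le_max_left i j)
    _ ≤ g b (2*(max i j)+1) := even_lt_odd_same b _
    _ ≤ g b (2*j+1) := odd_anti b (le_max_right i j)

end CFAux

namespace CFAux
variable (b : ℕ → ℕ+)

lemma bddAbove_even : BddAbove (Set.range (fun k => g b (2*k))) := by
  refine ⟨g b 1, ?_⟩
  rintro z ⟨k, rfl⟩
  simpa using even_le_odd b k 0

lemma bddBelow_odd : BddBelow (Set.range (fun k => g b (2*k+1))) := by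
  refine ⟨g b 0, ?_⟩
  rintro z ⟨k, rfl⟩
  simpa using even_le_odd b 0 k

noncomputable def L : ℝ := ⨆ k, g b (2*k)

lemma tendsto_even : Tendsto (fun k => g b (2*k)) atTop (𝓝 (L b)) :=
  tendsto_atTop_ciSup (even_mono b) (bddAbove_even b)

lemma tendsto_odd : Tendsto (fun k => g b (2*k+1)) atTop (𝓝 (⨅ k, g b (2*k+1))) :=
  tendsto_atTop_ciInf (odd_anti b) (bddBelow_odd b)

lemma diff_tendsto : Tendsto (fun k => g b (2*k+1) - g b (2*k)) atTop (𝓝 0) := by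
  refine squeeze_zero' (g := fun k : ℕ => 1 / (k : ℝ)) ?_ ?_ tendsto_one_div_atTop_nhds_zero_nat
  · filter_upwards [] with k
    have h := g_succ_sub b (2*k)
    have hsign : ((-1:ℝ))^(2*k) = 1 := by simp [pow_mul]
    rw [hsign] at h
    rw [h]
    positivity
  · filter_upwards [eventually_ge_atTop 1] with k hk
    have h := g_succ_sub b (2*k)
    have hsign : ((-1:ℝ))^(2*k) = 1 := by simp [pow_mul]
    rw [hsign] at h
    rw [h]
    have hq1 : (k : ℝ) ≤ (qden b (2*k) : ℝ) := by
      have := le_two_mul_qden b (2*k)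
      exact_mod_cast (by omega : k ≤ qden b (2*k))
    have hq2 : (1 : ℝ) ≤ (qden b (2*k+1) : ℝ) := by
      exact_mod_cast qden_pos b (2*k+1)
    have hk' : (0:ℝ) < (k:ℝ) := by exact_mod_cast hk
    rw [div_le_div_iff₀ (mul_pos (qden_pos' b (2*k)) (qden_pos' b (2*k+1))) hk']
    nlinarith

lemma inf_eq_sup : (⨅ k, g b (2*k+1)) = L b := by
  have h1 := (tendsto_odd b).sub (tendsto_even b)
  have h2 := diff_tendsto b
  have := tendsto_nhds_unique h1 h2
  linarith

lemma tendsto_g : Tendsto (g b) atTop (𝓝 (L b)) := by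
  have hdiv : Tendsto (fun m : ℕ => m / 2) atTop atTop := by
    apply tendsto_atTop_atTop.mpr
    intro N
    exact ⟨2*N, fun m hm => by omega⟩
  apply tendsto_of_tendsto_of_tendsto_of_le_of_le
    ((tendsto_even b).comp hdiv) (((inf_eq_sup b) ▸ tendsto_odd b).comp hdiv)
  · intro m
    simp only [Function.comp]
    rcases Nat.even_or_odd m with ⟨k, hk⟩ | ⟨k, hk⟩
    · subst hk; rw [show (k+k)/2 = k by omega, show k + k = 2*k by ring]
    · subst hk; rw [show (2*k+1)/2 = k by omega]
      exact even_lt_odd_same b k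
  · intro m
    simp only [Function.comp]
    rcases Nat.even_or_odd m with ⟨k, hk⟩ | ⟨k, hk⟩
    · subst hk; rw [show (k+k)/2 = k by omega, show k + k = 2*k by ring]
      exact even_lt_odd_same b k
    · subst hk; rw [show (2*k+1)/2 = k by omega]

lemma cfVal_eq : cfVal b = L b := by
  have : Tendsto (fun n => (pnum b n : ℝ) / (qden b n : ℝ)) atTop (𝓝 (L b)) := tendsto_g b
  exact this.limUnder_eq

lemma even_le_cf (k : ℕ) : g b (2*k) ≤ cfVal b := by
  rw [cfVal_eq]
  exact le_ciSup (bddAbove_even b) k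

lemma cf_le_odd (k : ℕ) : cfVal b ≤ g b (2*k+1) := by
  rw [cfVal_eq, ← inf_eq_sup]
  exact ciInf_le (bddBelow_odd b) k

lemma sandwich (m : ℕ) :
    0 ≤ (-1:ℝ)^m * (cfVal b - g b m) ∧ 0 ≤ (-1:ℝ)^m * (g b (m+1) - cfVal b) := by
  rcases Nat.even_or_odd m with ⟨k, hk⟩ | ⟨k, hk⟩
  · have hm : m = 2*k := by omega
    subst hm
    have hsign : ((-1:ℝ))^(2*k) = 1 := by simp [pow_mul]
    rw [hsign]
    constructor
    · nlinarith [even_le_cf b k]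
    · nlinarith [cf_le_odd b k]
  · have hm : m = 2*k+1 := by omega
    subst hm
    have hsign : ((-1:ℝ))^(2*k+1) = -1 := by simp [pow_succ, pow_mul]
    rw [hsign]
    constructor
    · nlinarith [cf_le_odd b k]
    · have : 2*k+1+1 = 2*(k+1) := by ring
      rw [this]
      nlinarith [even_le_cf b (k+1)]

end CFAux

namespace CFAux

lemma detR (c : ℕ → ℕ+) (m : ℕ) :
    (pnum c (m+1) : ℝ) * qden c m - (pnum c m : ℝ) * qden c (m+1) = (-1)^m := by
  exact_mod_cast det c m

lemma detM (c : ℕ → ℕ+) (n : ℕ) :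
    ((pnum c (n+1) : ℤ) + pnum c n) * qden c (n+2)
      - (pnum c (n+2) : ℤ) * ((qden c (n+1) : ℤ) + qden c n)
      = (-1)^n * (1 - (c (n+1) : ℤ)) := by
  have h1 := det c (n+1)
  have h2 := det2 c n
  have hs : ((-1:ℤ))^(n+1) = -(-1)^n := by ring
  rw [hs] at h1
  linear_combination -h1 - h2

lemma M_sub_g (c : ℕ → ℕ+) (n : ℕ) :
    ((pnum c (n+1) : ℝ) + pnum c n) / ((qden c (n+1) : ℝ) + qden c n) - g c (n+2)
      = (-1)^(n+1) * ((c (n+1) : ℝ) - 1)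
        / ((qden c (n+2) : ℝ) * ((qden c (n+1) : ℝ) + qden c n)) := by
  have h := detM c n
  have h' : ((pnum c (n+1) : ℝ) + pnum c n) * qden c (n+2)
      - (pnum c (n+2) : ℝ) * ((qden c (n+1) : ℝ) + qden c n)
      = (-1)^n * (1 - (c (n+1) : ℝ)) := by exact_mod_cast h
  have h1 := qden_pos' c (n+1)
  have h2 := qden_pos' c n
  have h3 := qden_pos' c (n+2)
  have hden : (0:ℝ) < (qden c (n+1) : ℝ) + qden c n := by linarith
  unfold g
  rw [div_sub_div _ _ hden.ne' h3.ne', div_eq_div_iff (by positivity) (by positivity)]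
  linear_combination ((qden c (n+2) : ℝ) * ((qden c (n+1) : ℝ) + qden c n)) * h'

lemma pq_agree (a b : ℕ → ℕ+) (n : ℕ) (hab : ∀ j < n, b j = a j) :
    ∀ m, m ≤ n → pnum b m = pnum a m ∧ qden b m = qden a m
  | 0, _ => ⟨rfl, rfl⟩
  | 1, h => by
      have : b 0 = a 0 := hab 0 (by omega)
      constructor <;> simp [pnum, qden, this]
  | (m+2), h => by
      have ih1 := pq_agree a b n hab (m+1) (by omega)
      have ih0 := pq_agree a b n hab m (by omega)
      have hb := hab (m+1) (by omega)
      constructor <;> simp [pnum, qden, hb, ih1.1, ih1.2, ih0.1, ih0.2]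

end CFAux

namespace CFAux

lemma s_cancel {s A D : ℝ} (hs2 : s*s = 1) : s * (s * A / D) = A / D := by
  calc s * (s*A/D) = (s*s)*A/D := by ring
    _ = A/D := by rw [hs2, one_mul]

lemma bound1 {A2 A3 Q2 Q3 Q4 π2 : ℝ} (hA2 : 1 ≤ A2) (hA3 : 1 ≤ A3)
    (hQ2 : 0 < Q2) (hQ3 : 0 < Q3) (hQ4 : 0 < Q4) (hπ : 0 < π2)
    (h43 : Q4 ≤ (A3+1)*Q3) (h32 : Q3 ≤ (A2+1)*Q2) (h2π : Q2 ≤ π2) :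
    1/(2*(A2+2)^2*((A3+1)^2*π2^2)) ≤ A3/(Q2*Q4) := by
  have hQ4' : Q4 ≤ (A3+1)*((A2+1)*Q2) := by
    calc Q4 ≤ (A3+1)*Q3 := h43
      _ ≤ (A3+1)*((A2+1)*Q2) := by
          apply mul_le_mul_of_nonneg_left h32; linarith
  have key : Q2*Q4 ≤ (A3+1)*(A2+1)*π2^2 := by
    calc Q2*Q4 ≤ Q2*((A3+1)*((A2+1)*Q2)) := mul_le_mul_of_nonneg_left hQ4' hQ2.le
      _ = (A3+1)*(A2+1)*Q2^2 := by ring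
      _ ≤ (A3+1)*(A2+1)*π2^2 := by
          apply mul_le_mul_of_nonneg_left (pow_le_pow_left₀ hQ2.le h2π 2)
          nlinarith
  rw [div_le_div_iff₀ (by positivity) (by positivity)]
  have hπ2 : (0:ℝ) ≤ π2^2 := by positivity
  have e1 : (A3+1)*(A2+1) ≤ (2*A3)*((A2+2)^2) :=
    mul_le_mul (by linarith) (by nlinarith) (by linarith) (by linarith)
  have e2 : (2*A3)*((A2+2)^2) ≤ ((2*A3)*((A2+2)^2))*((A3+1)^2) :=
    le_mul_of_one_le_right (by positivity) (by nlinarith)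
  calc 1*(Q2*Q4) = Q2*Q4 := one_mul _
    _ ≤ (A3+1)*(A2+1)*π2^2 := key
    _ ≤ (((2*A3)*((A2+2)^2))*((A3+1)^2))*π2^2 :=
        mul_le_mul_of_nonneg_right (le_trans e1 e2) hπ2
    _ = A3*(2*(A2+2)^2*((A3+1)^2*π2^2)) := by ring

lemma bound2 {A2 A3 Q3 D π2 : ℝ} (hA2 : 2 ≤ A2) (hA3 : 1 ≤ A3)
    (hQ3 : 0 < Q3) (hD : 0 < D) (hπ : 0 < π2)
    (h3π : Q3 ≤ (A2+1)*π2) (hDπ : D ≤ 2*π2) :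
    1/(2*(A2+2)^2*((A3+1)^2*π2^2)) ≤ (A2-1)/(Q3*D) := by
  have key : Q3*D ≤ 2*(A2+1)*π2^2 := by
    calc Q3*D ≤ ((A2+1)*π2)*(2*π2) := by
          apply mul_le_mul h3π hDπ hD.le; nlinarith
      _ = 2*(A2+1)*π2^2 := by ring
  rw [div_le_div_iff₀ (by positivity) (by positivity)]
  have hπ2 : (0:ℝ) ≤ π2^2 := by positivity
  have e1 : 2*(A2+1) ≤ 2*(A2+2)^2 := by nlinarith
  have e2 : 2*(A2+2)^2 ≤ (A2-1)*(2*(A2+2)^2) :=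
    le_mul_of_one_le_left (by positivity) (by linarith)
  have e3 : (A2-1)*(2*(A2+2)^2) ≤ ((A2-1)*(2*(A2+2)^2))*((A3+1)^2) :=
    le_mul_of_one_le_right (by nlinarith) (by nlinarith)
  calc 1*(Q3*D) = Q3*D := one_mul _
    _ ≤ 2*(A2+1)*π2^2 := key
    _ ≤ (((A2-1)*(2*(A2+2)^2))*((A3+1)^2))*π2^2 := by
        apply mul_le_mul_of_nonneg_right _ hπ2
        linarith
    _ = (A2-1)*(2*(A2+2)^2*((A3+1)^2*π2^2)) := by ring

lemma bound3 {A3 A4 Q3 Q4 Q5 π3 : ℝ} (hA3 : 1 ≤ A3) (hA4 : 1 ≤ A4)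
    (hQ3 : 0 < Q3) (hQ4 : 0 < Q4) (hQ5 : 0 < Q5) (hπ : 0 < π3)
    (h54 : Q5 ≤ (A4+1)*Q4) (h43 : Q4 ≤ (A3+1)*Q3) (h3π : Q3 ≤ π3) :
    1/(2*(A3+2)^2*π3^2) ≤ A4/(Q3*Q5) := by
  have hQ5' : Q5 ≤ (A4+1)*((A3+1)*Q3) := by
    calc Q5 ≤ (A4+1)*Q4 := h54
      _ ≤ (A4+1)*((A3+1)*Q3) := by apply mul_le_mul_of_nonneg_left h43; linarith
  have key : Q3*Q5 ≤ (A4+1)*(A3+1)*π3^2 := by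
    calc Q3*Q5 ≤ Q3*((A4+1)*((A3+1)*Q3)) := mul_le_mul_of_nonneg_left hQ5' hQ3.le
      _ = (A4+1)*(A3+1)*Q3^2 := by ring
      _ ≤ (A4+1)*(A3+1)*π3^2 := by
          apply mul_le_mul_of_nonneg_left (pow_le_pow_left₀ hQ3.le h3π 2)
          nlinarith
  rw [div_le_div_iff₀ (by positivity) (by positivity)]
  have hπ2 : (0:ℝ) ≤ π3^2 := by positivity
  have e1 : (A4+1)*(A3+1) ≤ (2*A4)*((A3+2)^2) :=
    mul_le_mul (by linarith) (by nlinarith) (by linarith) (by linarith)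
  calc 1*(Q3*Q5) = Q3*Q5 := one_mul _
    _ ≤ (A4+1)*(A3+1)*π3^2 := key
    _ ≤ ((2*A4)*((A3+2)^2))*π3^2 := mul_le_mul_of_nonneg_right e1 hπ2
    _ = A4*(2*(A3+2)^2*π3^2) := by ring

end CFAux

/-- The set `I` of irrational numbers of `[0,1]`. -/
def Iirr : Set ℝ := {x | x ∈ Set.Icc (0:ℝ) 1 ∧ Irrational x}

/-- The fundamental interval `I_n(x)` of rank `n` for `x = [a_1, a_2, …]`: the set of those
irrationals `y = [b_1, b_2, …]` whose first `n` partial quotients agree with those of `x`. -/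
def fundInt (a : ℕ → ℕ+) (n : ℕ) : Set ℝ :=
  {y | ∃ b : ℕ → ℕ+, cfVal b = y ∧ ∀ j < n, b j = a j}

set_option maxHeartbeats 1000000 in
open CFAux in
/-- If `x ∈ I` has partial quotients `a` and `y ∈ I_n(x) \\ I_{n+1}(x)` with `n ≥ 1`, then
there is `j₀ ∈ {n+2, n+3}` (1-indexed; `{n+1, n+2}` for the 0-indexed sequence `a`) with
`|x − y| ≥ 1 / ( 2 (a_{j₀}+2)² ∏_{1 ≤ j ≤ n+3, j ≠ j₀} (a_j+1)² )`. -/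
theorem abs_sub_ge_of_mem_fundInt_diff (a : ℕ → ℕ+) (x : ℝ) (hx : x ∈ Iirr)
    (hxa : cfVal a = x) (n : ℕ) (hn : 1 ≤ n) (y : ℝ)
    (hy : y ∈ fundInt a n \ fundInt a (n+1)) :
    ∃ j₀ ∈ ({n+1, n+2} : Finset ℕ),
      1 / (2 * ((a j₀ : ℝ) + 2) ^ 2 *
          ∏ j ∈ (Finset.range (n+3)).erase j₀, ((a j : ℝ) + 1) ^ 2) ≤ |x - y| := by
  classical
  obtain ⟨hy1, hy2⟩ := hy
  obtain ⟨b, hby, hbj⟩ := hy1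
  have hbn : b n ≠ a n := by
    intro h
    exact hy2 ⟨b, hby, fun j hj => by
      rcases Nat.lt_succ_iff_lt_or_eq.mp hj with h' | h'
      · exact hbj j h'
      · exact h' ▸ h⟩
  obtain ⟨m, rfl⟩ : ∃ m, n = m + 1 := ⟨n - 1, by omega⟩
  have hag := CFAux.pq_agree a b (m+1) hbj
  -- abbreviations
  set s : ℝ := (-1)^m with hs_def
  have hs2 : s * s = 1 := by
    rw [hs_def, ← pow_add]
    exact Even.neg_one_pow ⟨m, by ring⟩
  have hsabs : |s| = 1 := by rw [hs_def, abs_pow, abs_neg, abs_one, one_pow]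
  have hsA : ((-1:ℝ))^(m+2) = s := by rw [hs_def]; ring
  have hsB : ((-1:ℝ))^(m+3) = -s := by rw [hs_def]; ring
  have hsD : ((-1:ℝ))^(m+4) = s := by rw [hs_def]; ring
  have hsE : ((-1:ℝ))^(m+5) = -s := by rw [hs_def]; ring
  -- sandwich facts for x
  have hx1 : 0 ≤ s * (x - g a (m+2)) := by
    have h := (sandwich a (m+2)).1; rw [hsA, hxa] at h; exact h
  have hx2 : 0 ≤ s * (g a (m+3) - x) := by
    have h := (sandwich a (m+3)).1
    rw [hxa] at h
    calc (0:ℝ) ≤ (-1)^(m+3) * (x - g a (m+3)) := h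
      _ = s * (g a (m+3) - x) := by rw [hsB]; ring
  have hx3 : 0 ≤ s * (x - g a (m+4)) := by
    have h := (sandwich a (m+4)).1; rw [hsD, hxa] at h; exact h
  have hx4 : 0 ≤ s * (g a (m+5) - x) := by
    have h := (sandwich a (m+5)).1
    rw [hxa] at h
    calc (0:ℝ) ≤ (-1)^(m+5) * (x - g a (m+5)) := h
      _ = s * (g a (m+5) - x) := by rw [hsE]; ring
  -- sandwich facts for y
  have hy3 : 0 ≤ s * (y - g b (m+2)) := by
    have h := (sandwich b (m+2)).1; rw [hsA, hby] at h; exact h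
  have hy4 : 0 ≤ s * (g b (m+3) - y) := by
    have h := (sandwich b (m+3)).1
    rw [hby] at h
    calc (0:ℝ) ≤ (-1)^(m+3) * (y - g b (m+3)) := h
      _ = s * (g b (m+3) - y) := by rw [hsB]; ring
  -- positivity of denominators
  have hQ := fun i => qden_pos' a i
  have hQb := fun i => qden_pos' b i
  -- p, q notation
  have hp1 : (0:ℝ) ≤ (pnum a (m+1) : ℝ) := by positivity
  have hp0 : (0:ℝ) ≤ (pnum a m : ℝ) := by positivity
  have key : (pnum a (m+1) : ℝ) * (qden a m : ℝ)
      - (pnum a m : ℝ) * (qden a (m+1) : ℝ) = s := by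
    rw [hs_def]; exact detR a m
  -- the Möbius map f and its monotonicity in direction s
  set p : ℝ := (pnum a (m+1) : ℝ)
  set q : ℝ := (qden a (m+1) : ℝ)
  set p0 : ℝ := (pnum a m : ℝ)
  set q0 : ℝ := (qden a m : ℝ)
  have hqpos : 0 < q := hQ (m+1)
  have hq0pos : 0 < q0 := hQ m
  have fmono : ∀ t r : ℝ, 0 < r → r ≤ t →
      0 ≤ s * ((t*p+p0)/(t*q+q0) - (r*p+p0)/(r*q+q0)) := by
    intro t r hr hrt
    have htpos : 0 < t := lt_of_lt_of_le hr hrt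
    have d1 : 0 < t*q+q0 := add_pos (mul_pos htpos hqpos) hq0pos
    have d2 : 0 < r*q+q0 := add_pos (mul_pos hr hqpos) hq0pos
    rw [div_sub_div _ _ d1.ne' d2.ne']
    have hnum : (t*p+p0)*(r*q+q0) - (t*q+q0)*(r*p+p0) = (t-r)*s := by
      linear_combination (t-r)*key
    rw [hnum]
    have : s * ((t-r)*s/((t*q+q0)*(r*q+q0))) = (t-r)*(s*s)/((t*q+q0)*(r*q+q0)) := by
      ring
    rw [this, hs2, mul_one]
    apply div_nonneg (by linarith) (by positivity)
  -- identifications of convergents as values of f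
  have hpb1 : (pnum b (m+1) : ℝ) = p := by rw [(hag (m+1) le_rfl).1]
  have hqb1 : (qden b (m+1) : ℝ) = q := by rw [(hag (m+1) le_rfl).2]
  have hpb0 : (pnum b m : ℝ) = p0 := by rw [(hag m (by omega)).1]
  have hqb0 : (qden b m : ℝ) = q0 := by rw [(hag m (by omega)).2]
  have hpa2 : (pnum a (m+2) : ℝ) = (a (m+1) : ℝ) * p + p0 := by
    show ((pnum a) (m+2) : ℝ) = _
    rw [pnum]; push_cast; ring
  have hqa2 : (qden a (m+2) : ℝ) = (a (m+1) : ℝ) * q + q0 := by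
    show ((qden a) (m+2) : ℝ) = _
    rw [qden]; push_cast; ring
  have hpb2 : (pnum b (m+2) : ℝ) = (b (m+1) : ℝ) * p + p0 := by
    show ((pnum b) (m+2) : ℝ) = _
    rw [pnum]; push_cast; rw [hpb1, hpb0]
  have hqb2 : (qden b (m+2) : ℝ) = (b (m+1) : ℝ) * q + q0 := by
    show ((qden b) (m+2) : ℝ) = _
    rw [qden]; push_cast; rw [hqb1, hqb0]
  have idA : g a (m+2) = ((a (m+1) : ℝ)*p + p0)/((a (m+1) : ℝ)*q + q0) := by
    unfold CFAux.g; rw [hpa2, hqa2]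
  have idB : g b (m+2) = ((b (m+1) : ℝ)*p + p0)/((b (m+1) : ℝ)*q + q0) := by
    unfold CFAux.g; rw [hpb2, hqb2]
  -- mediants
  have hMa : 0 ≤ s * ((((a (m+1) : ℝ)+1)*p + p0)/(((a (m+1) : ℝ)+1)*q + q0) - g a (m+3)) := by
    have h : ((pnum a (m+2) : ℝ) + pnum a (m+1)) / ((qden a (m+2) : ℝ) + qden a (m+1))
        - g a (m+3)
        = (-1)^(m+2) * ((a (m+2) : ℝ) - 1)
          / ((qden a (m+3) : ℝ) * ((qden a (m+2) : ℝ) + qden a (m+1))) := M_sub_g a (m+1)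
    have hb1 : (1:ℝ) ≤ (a (m+2) : ℝ) := by exact_mod_cast (a (m+2)).one_le
    have hnum : ((pnum a (m+2) : ℝ) + pnum a (m+1)) = ((a (m+1) : ℝ)+1)*p + p0 := by
      rw [hpa2]; show _ = _ ; unfold p; ring
    have hden : ((qden a (m+2) : ℝ) + qden a (m+1)) = ((a (m+1) : ℝ)+1)*q + q0 := by
      rw [hqa2]; ring
    rw [hnum, hden, hsA] at h
    rw [h]
    have : s * (s * ((a (m+2) : ℝ) - 1) / ((qden a (m+3) : ℝ) * (((a (m+1) : ℝ)+1)*q + q0)))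
        = (s*s) * (((a (m+2) : ℝ) - 1) / ((qden a (m+3) : ℝ) * (((a (m+1) : ℝ)+1)*q + q0))) := by
      ring
    rw [this, hs2, one_mul]
    have hd : (0:ℝ) < (qden a (m+3) : ℝ) * (((a (m+1) : ℝ)+1)*q + q0) :=
      mul_pos (hQ (m+3))
        (add_pos (mul_pos (by positivity) hqpos) hq0pos)
    apply div_nonneg (by linarith) hd.le
  have hMb : 0 ≤ s * ((((b (m+1) : ℝ)+1)*p + p0)/(((b (m+1) : ℝ)+1)*q + q0) - g b (m+3)) := by
    have h : ((pnum b (m+2) : ℝ) + pnum b (m+1)) / ((qden b (m+2) : ℝ) + qden b (m+1))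
        - g b (m+3)
        = (-1)^(m+2) * ((b (m+2) : ℝ) - 1)
          / ((qden b (m+3) : ℝ) * ((qden b (m+2) : ℝ) + qden b (m+1))) := M_sub_g b (m+1)
    have hb1 : (1:ℝ) ≤ (b (m+2) : ℝ) := by exact_mod_cast (b (m+2)).one_le
    have hnum : ((pnum b (m+2) : ℝ) + pnum b (m+1)) = ((b (m+1) : ℝ)+1)*p + p0 := by
      rw [hpb2, hpb1]; ring
    have hden : ((qden b (m+2) : ℝ) + qden b (m+1)) = ((b (m+1) : ℝ)+1)*q + q0 := by
      rw [hqb2, hqb1]; ring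
    rw [hnum, hden, hsA] at h
    rw [h]
    have : s * (s * ((b (m+2) : ℝ) - 1) / ((qden b (m+3) : ℝ) * (((b (m+1) : ℝ)+1)*q + q0)))
        = (s*s) * (((b (m+2) : ℝ) - 1) / ((qden b (m+3) : ℝ) * (((b (m+1) : ℝ)+1)*q + q0))) := by
      ring
    rw [this, hs2, one_mul]
    have hd : (0:ℝ) < (qden b (m+3) : ℝ) * (((b (m+1) : ℝ)+1)*q + q0) :=
      mul_pos (hQb (m+3))
        (add_pos (mul_pos (by positivity) hqpos) hq0pos)
    apply div_nonneg (by linarith) hd.le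

  -- index normalization
  simp only [show m+1+1 = m+2 from rfl, show m+1+2 = m+3 from rfl, show m+1+3 = m+4 from rfl]
  -- two-apart difference facts
  have h24 : g a (m+4) - g a (m+2)
      = (-1)^(m+2) * ((a (m+3)):ℝ) / ((qden a (m+2):ℝ) * (qden a (m+4):ℝ)) := g_two_sub a (m+2)
  have e1 : s * (g a (m+4) - g a (m+2))
      = ((a (m+3)):ℝ) / ((qden a (m+2):ℝ) * (qden a (m+4):ℝ)) := by
    rw [h24, hsA]; exact s_cancel hs2
  have h35 : g a (m+5) - g a (m+3)
      = (-1)^(m+3) * ((a (m+4)):ℝ) / ((qden a (m+3):ℝ) * (qden a (m+5):ℝ)) := g_two_sub a (m+3)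
  have e2 : s * (g a (m+3) - g a (m+5))
      = ((a (m+4)):ℝ) / ((qden a (m+3):ℝ) * (qden a (m+5):ℝ)) := by
    have : s * (g a (m+3) - g a (m+5)) = -(s * (g a (m+5) - g a (m+3))) := by ring
    rw [this, h35, hsB]
    have : -(s * (-s * ((a (m+4)):ℝ) / ((qden a (m+3):ℝ) * (qden a (m+5):ℝ))))
        = s * (s * ((a (m+4)):ℝ) / ((qden a (m+3):ℝ) * (qden a (m+5):ℝ))) := by ring
    rw [this]; exact s_cancel hs2
  -- numeric helper facts
  have hA : ∀ i, (1:ℝ) ≤ (a i : ℝ) := fun i => by exact_mod_cast (a i).one_le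
  have hQle : ∀ i, (qden a i : ℝ) ≤ ∏ j ∈ Finset.range i, ((a j:ℝ)+1) := by
    intro i
    have h := qden_le_prod a i
    calc (qden a i : ℝ) ≤ ((∏ j ∈ Finset.range i, ((a j:ℕ)+1) : ℕ) : ℝ) := by exact_mod_cast h
      _ = ∏ j ∈ Finset.range i, ((a j:ℝ)+1) := by push_cast; rfl
  have hQrec : ∀ i, (qden a (i+2) : ℝ) ≤ ((a (i+1):ℝ)+1) * (qden a (i+1):ℝ) := by
    intro i
    have h1 : qden a (i+2) = (a (i+1):ℕ) * qden a (i+1) + qden a i := rfl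
    have h2 := qden_le_succ a i
    have h3 : qden a (i+2) ≤ ((a (i+1):ℕ)+1) * qden a (i+1) := by
      rw [h1, add_mul, one_mul]
      exact Nat.add_le_add_left h2 _
    exact_mod_cast h3
  have hQmono : ∀ i, (qden a i : ℝ) ≤ (qden a (i+1) : ℝ) := fun i => by
    exact_mod_cast qden_le_succ a i
  have habsxy : s*(x-y) ≤ |x - y| := by
    calc s*(x-y) ≤ |s*(x-y)| := le_abs_self _
      _ = |x-y| := by rw [abs_mul, hsabs, one_mul]
  have habsyx : s*(y-x) ≤ |x - y| := by
    calc s*(y-x) ≤ |s*(y-x)| := le_abs_self _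
      _ = |y-x| := by rw [abs_mul, hsabs, one_mul]
      _ = |x-y| := abs_sub_comm y x
  have hπ2pos : (0:ℝ) < ∏ j ∈ Finset.range (m+2), ((a j:ℝ)+1) :=
    lt_of_lt_of_le (hQ (m+2)) (hQle (m+2))
  have hπ3pos : (0:ℝ) < ∏ j ∈ Finset.range (m+3), ((a j:ℝ)+1) :=
    lt_of_lt_of_le (hQ (m+3)) (hQle (m+3))
  have herase2 : (Finset.range (m+4)).erase (m+2)
      = insert (m+3) (Finset.range (m+2)) := by
    ext j; simp only [Finset.mem_erase, Finset.mem_range, Finset.mem_insert]; omega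
  have hprod2 : ∏ j ∈ (Finset.range (m+4)).erase (m+2), ((a j:ℝ)+1)^2
      = ((a (m+3):ℝ)+1)^2 * (∏ j ∈ Finset.range (m+2), ((a j:ℝ)+1))^2 := by
    rw [herase2, Finset.prod_insert (by simp), Finset.prod_pow]
  have herase3 : (Finset.range (m+4)).erase (m+3) = Finset.range (m+3) := by
    ext j; simp only [Finset.mem_erase, Finset.mem_range]; omega
  have hprod3 : ∏ j ∈ (Finset.range (m+4)).erase (m+3), ((a j:ℝ)+1)^2
      = (∏ j ∈ Finset.range (m+3), ((a j:ℝ)+1))^2 := by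
    rw [herase3, Finset.prod_pow]
  -- case split on the differing digit
  have hne : (b (m+1) : ℕ) ≠ (a (m+1) : ℕ) := fun h => hbn (PNat.coe_injective h)
  rcases Nat.lt_or_ge (b (m+1) : ℕ) (a (m+1) : ℕ) with hklt | hkge
  · -- Case I : b's digit smaller, j₀ = m+2
    refine ⟨m+2, by simp, ?_⟩
    have hble : ((b (m+1):ℝ)+1) ≤ (a (m+1):ℝ) := by
      have : (b (m+1):ℕ)+1 ≤ (a (m+1):ℕ) := hklt
      exact_mod_cast this
    have hmid := fmono ((a (m+1):ℝ)) ((b (m+1):ℝ)+1) (by positivity) hble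
    rw [← idA] at hmid
    have hchain : s*(x - y) = s*(x - g a (m+2))
        + s*(g a (m+2) - (((b (m+1):ℝ)+1)*p + p0)/(((b (m+1):ℝ)+1)*q + q0))
        + s*((((b (m+1):ℝ)+1)*p + p0)/(((b (m+1):ℝ)+1)*q + q0) - g b (m+3))
        + s*(g b (m+3) - y) := by ring
    have h1 : s*(x - g a (m+2)) ≤ s*(x-y) := by
      rw [hchain]; linarith [hmid, hMb, hy4]
    have h2 : ((a (m+3)):ℝ) / ((qden a (m+2):ℝ) * (qden a (m+4):ℝ)) ≤ s*(x - g a (m+2)) := by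
      have e0 : s*(x - g a (m+2)) = s*(x - g a (m+4)) + s*(g a (m+4) - g a (m+2)) := by ring
      rw [e0, e1]; linarith [hx3]
    rw [hprod2]
    calc 1 / (2 * ((a (m+2):ℝ) + 2)^2 *
          (((a (m+3):ℝ)+1)^2 * (∏ j ∈ Finset.range (m+2), ((a j:ℝ)+1))^2))
        ≤ ((a (m+3)):ℝ) / ((qden a (m+2):ℝ) * (qden a (m+4):ℝ)) :=
          bound1 (hA (m+2)) (hA (m+3)) (hQ (m+2)) (hQ (m+3)) (hQ (m+4)) hπ2pos
            (hQrec (m+2)) (hQrec (m+1)) (hQle (m+2))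
      _ ≤ s*(x - g a (m+2)) := h2
      _ ≤ s*(x-y) := h1
      _ ≤ |x - y| := habsxy
  · -- Case II : b's digit larger
    have haltb : (a (m+1):ℕ) < (b (m+1):ℕ) := lt_of_le_of_ne hkge (Ne.symm hne)
    have hble : ((a (m+1):ℝ)+1) ≤ (b (m+1):ℝ) := by
      have : (a (m+1):ℕ)+1 ≤ (b (m+1):ℕ) := haltb
      exact_mod_cast this
    have hmid := fmono ((b (m+1):ℝ)) ((a (m+1):ℝ)+1) (by positivity) hble
    rw [← idB] at hmid
    have hchain : s*(y - x) = s*(y - g b (m+2))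
        + s*(g b (m+2) - (((a (m+1):ℝ)+1)*p + p0)/(((a (m+1):ℝ)+1)*q + q0))
        + s*((((a (m+1):ℝ)+1)*p + p0)/(((a (m+1):ℝ)+1)*q + q0) - g a (m+3))
        + s*(g a (m+3) - x) := by ring
    have h1 : s*((((a (m+1):ℝ)+1)*p + p0)/(((a (m+1):ℝ)+1)*q + q0) - g a (m+3))
        + s*(g a (m+3) - x) ≤ s*(y-x) := by
      rw [hchain]; linarith [hy3, hmid]
    rcases Nat.lt_or_ge 1 (a (m+2) : ℕ) with hA2big | hA2one
    · -- Case IIa : a (m+2) ≥ 2, j₀ = m+2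
      refine ⟨m+2, by simp, ?_⟩
      have hMaEq : s * ((((a (m+1):ℝ)+1)*p + p0)/(((a (m+1):ℝ)+1)*q + q0) - g a (m+3))
          = ((a (m+2):ℝ) - 1) / ((qden a (m+3):ℝ) * (((a (m+1):ℝ)+1)*q + q0)) := by
        have h : ((pnum a (m+2) : ℝ) + pnum a (m+1)) / ((qden a (m+2) : ℝ) + qden a (m+1))
            - g a (m+3)
            = (-1)^(m+2) * ((a (m+2) : ℝ) - 1)
              / ((qden a (m+3) : ℝ) * ((qden a (m+2) : ℝ) + qden a (m+1))) := M_sub_g a (m+1)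
        have hnum : ((pnum a (m+2) : ℝ) + pnum a (m+1)) = ((a (m+1) : ℝ)+1)*p + p0 := by
          rw [hpa2]; ring
        have hden : ((qden a (m+2) : ℝ) + qden a (m+1)) = ((a (m+1) : ℝ)+1)*q + q0 := by
          rw [hqa2]; ring
        rw [hnum, hden, hsA] at h
        rw [h]; exact s_cancel hs2
      have hA2R : (2:ℝ) ≤ (a (m+2):ℝ) := by exact_mod_cast hA2big
      have hDpos : (0:ℝ) < ((a (m+1):ℝ)+1)*q + q0 :=
        add_pos (mul_pos (by positivity) hqpos) hq0pos
      have hDle : ((a (m+1):ℝ)+1)*q + q0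
          ≤ 2 * ∏ j ∈ Finset.range (m+2), ((a j:ℝ)+1) := by
        have h1' : ((a (m+1):ℝ)+1)*q + q0 = (qden a (m+2):ℝ) + q := by
          rw [hqa2]; ring
        rw [h1']
        have h2' : q ≤ (qden a (m+2):ℝ) := hQmono (m+1)
        have h3' := hQle (m+2)
        linarith
      have hQ3le : (qden a (m+3):ℝ) ≤ ((a (m+2):ℝ)+1) * ∏ j ∈ Finset.range (m+2), ((a j:ℝ)+1) := by
        calc (qden a (m+3):ℝ) ≤ ((a (m+2):ℝ)+1) * (qden a (m+2):ℝ) := hQrec (m+1)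
          _ ≤ ((a (m+2):ℝ)+1) * ∏ j ∈ Finset.range (m+2), ((a j:ℝ)+1) := by
              apply mul_le_mul_of_nonneg_left (hQle (m+2)); positivity
      rw [hprod2]
      calc 1 / (2 * ((a (m+2):ℝ) + 2)^2 *
            (((a (m+3):ℝ)+1)^2 * (∏ j ∈ Finset.range (m+2), ((a j:ℝ)+1))^2))
          ≤ ((a (m+2):ℝ) - 1) / ((qden a (m+3):ℝ) * (((a (m+1):ℝ)+1)*q + q0)) :=
            bound2 hA2R (hA (m+3)) (hQ (m+3)) hDpos hπ2pos hQ3le hDle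
        _ = s * ((((a (m+1):ℝ)+1)*p + p0)/(((a (m+1):ℝ)+1)*q + q0) - g a (m+3)) := hMaEq.symm
        _ ≤ s*(y-x) := by linarith [h1, hx2]
        _ ≤ |x - y| := habsyx
    · -- Case IIb : a (m+2) = 1, j₀ = m+3
      have hA2eq : (a (m+2) : ℕ) = 1 := le_antisymm hA2one (a (m+2)).one_le
      refine ⟨m+3, by simp, ?_⟩
      have hMAeq : (((a (m+1):ℝ)+1)*p + p0)/(((a (m+1):ℝ)+1)*q + q0) = g a (m+3) := by
        have hpa3 : (pnum a (m+3) : ℝ) = ((a (m+1):ℝ)+1)*p + p0 := by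
          show ((pnum a) (m+3) : ℝ) = _
          rw [pnum]; push_cast [hA2eq, hpa2]; ring
        have hqa3 : (qden a (m+3) : ℝ) = ((a (m+1):ℝ)+1)*q + q0 := by
          show ((qden a) (m+3) : ℝ) = _
          rw [qden]; push_cast [hA2eq, hqa2]; ring
        unfold CFAux.g; rw [hpa3, hqa3]
      have h2 : ((a (m+4)):ℝ) / ((qden a (m+3):ℝ) * (qden a (m+5):ℝ))
          ≤ s*(g a (m+3) - x) := by
        have e0 : s*(g a (m+3) - x) = s*(g a (m+3) - g a (m+5)) + s*(g a (m+5) - x) := by ring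
        rw [e0, e2]; linarith [hx4]
      rw [hprod3]
      calc 1 / (2 * ((a (m+3):ℝ) + 2)^2 * (∏ j ∈ Finset.range (m+3), ((a j:ℝ)+1))^2)
          ≤ ((a (m+4)):ℝ) / ((qden a (m+3):ℝ) * (qden a (m+5):ℝ)) :=
            bound3 (hA (m+3)) (hA (m+4)) (hQ (m+3)) (hQ (m+4)) (hQ (m+5)) hπ3pos
              (hQrec (m+3)) (hQrec (m+2)) (hQle (m+3))
        _ ≤ s*(g a (m+3) - x) := h2
        _ ≤ s*(y-x) := by
            have := h1
            rw [hMAeq] at this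
            linarith
        _ ≤ |x - y| := habsyx
end

section
/- For every n ≥ 1 and every x ∈ I, f_1 maps the fundamental interval I_n(x) into I_m(f_1(x)), where m = n/2 if n is even and m = (n+1)/2 if n is odd; consequently f_1 is continuous on I (and the same holds for f_2 with m = ⌊n/2⌋ when ⌊n/2⌋ ≥ 1). -/
open Filter Finset MeasureTheory

/-- The (unique) sequence of partial quotients of `x`, when `x` has a continued
fraction expansion. -/
noncomputable def coeff (x : ℝ) : ℕ → ℕ+ := by
  classical
  exact if h : ∃ a : ℕ → ℕ+, cfVal a = x then h.choose else fun _ => 1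

/-- First component of Cantor's bijection: `f₁([a_1,a_2,…]) = [a_1,a_3,a_5,…]`. -/
noncomputable def cantorF1 (x : ℝ) : ℝ := cfVal (fun j => coeff x (2*j))

/-- Second component of Cantor's bijection: `f₂([a_1,a_2,…]) = [a_2,a_4,a_6,…]`. -/
noncomputable def cantorF2 (x : ℝ) : ℝ := cfVal (fun j => coeff x (2*j+1))


namespace CF

noncomputable def conv (a : ℕ → ℕ+) (n : ℕ) : ℝ := (pnum a n : ℝ) / (qden a n : ℝ)

lemma qden_pos (a : ℕ → ℕ+) : ∀ n, 0 < qden a n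
  | 0 => Nat.one_pos
  | 1 => (a 0).pos
  | (n+2) => by
      have h1 := qden_pos a (n+1)
      have h2 := qden_pos a n
      simp only [qden]; positivity

lemma le_qden (a : ℕ → ℕ+) : ∀ n, n ≤ qden a n
  | 0 => by simp [qden]
  | 1 => by simp only [qden]; exact (a 0).pos
  | (n+2) => by
      have h1 := le_qden a (n+1)
      have h2 := le_qden a n
      have ha : 1 ≤ (a (n+1) : ℕ) := (a (n+1)).pos
      have hq : 1 ≤ qden a n := qden_pos a n
      calc n + 2 ≤ (n+1) + 1 := by omega
        _ ≤ (a (n+1) : ℕ) * qden a (n+1) + qden a n := by nlinarith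

lemma pnum_le_qden (a : ℕ → ℕ+) : ∀ n, pnum a n ≤ qden a n
  | 0 => by simp [qden, pnum]
  | 1 => by simp only [qden, pnum]; exact (a 0).pos
  | (n+2) => by
      have h1 := pnum_le_qden a (n+1)
      have h2 := pnum_le_qden a n
      simp only [qden, pnum]
      have : (a (n+1) : ℕ) * pnum a (n+1) ≤ (a (n+1) : ℕ) * qden a (n+1) :=
        Nat.mul_le_mul_left _ h1
      omega

lemma det (a : ℕ → ℕ+) : ∀ n, (pnum a (n+1) : ℤ) * qden a n - (pnum a n : ℤ) * qden a (n+1) = (-1)^n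
  | 0 => by simp [qden, pnum]
  | (n+1) => by
      have ih := det a n
      simp only [qden, pnum, pow_succ]
      push_cast
      ring_nf
      ring_nf at ih
      linarith

lemma conv_sub (a : ℕ → ℕ+) (n : ℕ) :
    conv a (n+1) - conv a n = (-1)^n / ((qden a n : ℝ) * qden a (n+1)) := by
  have h1 : (0:ℝ) < qden a n := by exact_mod_cast qden_pos a n
  have h2 : (0:ℝ) < qden a (n+1) := by exact_mod_cast qden_pos a (n+1)
  have hd' : (pnum a (n+1) : ℝ) * qden a n - (pnum a n : ℝ) * qden a (n+1) = (-1)^n := by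
    exact_mod_cast det a n
  have h3 : conv a (n+1) - conv a n =
      ((pnum a (n+1) : ℝ) * qden a n - (pnum a n : ℝ) * qden a (n+1)) /
        ((qden a n : ℝ) * qden a (n+1)) := by
    unfold conv; rw [div_sub_div _ _ h2.ne' h1.ne']; ring
  rw [h3, hd']

lemma conv_nonneg (a : ℕ → ℕ+) (n : ℕ) : 0 ≤ conv a n := by
  unfold conv; positivity

lemma conv_le_one (a : ℕ → ℕ+) (n : ℕ) : conv a n ≤ 1 := by
  have h2 : (0:ℝ) < qden a n := by exact_mod_cast qden_pos a n
  rw [conv, div_le_one h2]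
  exact_mod_cast pnum_le_qden a n

lemma abs_conv_sub (a : ℕ → ℕ+) {m n : ℕ} (hn : 1 ≤ n) (h : n ≤ m) :
    |conv a m - conv a n| ≤ 1/(n:ℝ) - 1/(m:ℝ) := by
  induction m with
  | zero => omega
  | succ m ih =>
      rcases Nat.lt_or_ge n (m+1) with hlt | hge
      · have hnm : n ≤ m := by omega
        have hm1 : (1:ℝ) ≤ m := by exact_mod_cast (hn.trans hnm)
        have key : |conv a (m+1) - conv a m| ≤ 1/(m:ℝ) - 1/((m:ℝ)+1) := by
          rw [conv_sub, abs_div, abs_pow, abs_neg, abs_one, one_pow]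
          have hq1 : (m:ℝ) ≤ qden a m := by exact_mod_cast le_qden a m
          have hq2 : ((m:ℝ)+1) ≤ qden a (m+1) := by exact_mod_cast le_qden a (m+1)
          have hm0 : (0:ℝ) < m := by linarith
          have h1 : (0:ℝ) < qden a m := by linarith
          have h2 : (0:ℝ) < qden a (m+1) := by linarith
          rw [abs_of_pos (by positivity)]
          have hle : (m:ℝ) * ((m:ℝ)+1) ≤ (qden a m : ℝ) * qden a (m+1) := by nlinarith
          have h3 : 1/(m:ℝ) - 1/((m:ℝ)+1) = 1/((m:ℝ)*((m:ℝ)+1)) := by field_simp; ring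
          rw [h3]
          exact one_div_le_one_div_of_le (by positivity) hle
        have htri := abs_sub_le (conv a (m+1)) (conv a m) (conv a n)
        have h4 := ih hnm
        have hc : ((m:ℝ)+1) = ((m+1 : ℕ) : ℝ) := by push_cast; ring
        rw [← hc]
        rw [abs_sub_comm] at key
        calc |conv a (m+1) - conv a n| ≤ |conv a (m+1) - conv a m| + |conv a m - conv a n| := htri
          _ ≤ (1/(m:ℝ) - 1/((m:ℝ)+1)) + (1/(n:ℝ) - 1/(m:ℝ)) := by
              rw [abs_sub_comm] at key; exact add_le_add key h4
          _ = 1/(n:ℝ) - 1/((m:ℝ)+1) := by ring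
      · have : n = m+1 := by omega
        subst this
        simp


lemma cauchySeq_conv (a : ℕ → ℕ+) : CauchySeq (conv a) := by
  rw [Metric.cauchySeq_iff']
  intro ε hε
  obtain ⟨N, hN⟩ := exists_nat_gt (1/ε)
  refine ⟨N + 1, fun m hm => ?_⟩
  have hN1 : 1 ≤ N + 1 := by omega
  have h := abs_conv_sub a hN1 hm
  rw [Real.dist_eq]
  have hNpos : (0:ℝ) < N + 1 := by positivity
  have h2 : 1/((N:ℝ)+1) < ε := by
    rw [div_lt_iff₀ hNpos]
    nlinarith [(div_lt_iff₀ hε).mp hN, hε.le]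
  have hm0 : (0:ℝ) < m := by
    have : (N+1 : ℕ) ≤ m := hm
    have := Nat.cast_le (α := ℝ) |>.mpr this
    push_cast at this; linarith
  have hcast : ((N+1 : ℕ) : ℝ) = (N:ℝ) + 1 := by push_cast; ring
  calc |conv a m - conv a (N+1)| ≤ 1/((N+1:ℕ):ℝ) - 1/(m:ℝ) := h
    _ ≤ 1/((N:ℝ)+1) := by
        rw [hcast]
        have hm1 : (0:ℝ) ≤ 1/(m:ℝ) := by positivity
        linarith
    _ < ε := h2

lemma tendsto_conv (a : ℕ → ℕ+) : Tendsto (conv a) atTop (nhds (cfVal a)) := by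
  obtain ⟨L, hL⟩ := cauchySeq_tendsto_of_complete (cauchySeq_conv a)
  have : cfVal a = L := hL.limUnder_eq
  rw [this]; exact hL

lemma abs_cfVal_sub_conv (a : ℕ → ℕ+) {n : ℕ} (hn : 1 ≤ n) :
    |cfVal a - conv a n| ≤ 1/(n:ℝ) := by
  have h : ∀ m, n ≤ m → |conv a m - conv a n| ≤ 1/(n:ℝ) := by
    intro m hm
    have := abs_conv_sub a hn hm
    have h0 : (0:ℝ) ≤ 1/(m:ℝ) := by positivity
    linarith
  have hlim : Tendsto (fun m => |conv a m - conv a n|) atTop (nhds (|cfVal a - conv a n|)) :=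
    ((tendsto_conv a).sub tendsto_const_nhds).abs
  exact le_of_tendsto hlim (eventually_atTop.mpr ⟨n, h⟩)

lemma cfVal_nonneg (a : ℕ → ℕ+) : 0 ≤ cfVal a :=
  le_of_tendsto_of_tendsto' tendsto_const_nhds (tendsto_conv a) (conv_nonneg a)

lemma cfVal_le_one (a : ℕ → ℕ+) : cfVal a ≤ 1 :=
  le_of_tendsto_of_tendsto' (tendsto_conv a) tendsto_const_nhds (conv_le_one a)

/-- tail relations -/
lemma tail_pq (a : ℕ → ℕ+) : ∀ n, pnum a (n+1) = qden (fun j => a (j+1)) n ∧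
    qden a (n+1) = (a 0 : ℕ) * qden (fun j => a (j+1)) n + pnum (fun j => a (j+1)) n
  | 0 => by simp [qden, pnum]
  | 1 => by simp [qden, pnum]; ring
  | (n+2) => by
      obtain ⟨ih1, ih2⟩ := tail_pq a (n+1)
      obtain ⟨ih1', ih2'⟩ := tail_pq a n
      constructor
      · show (a (n+2) : ℕ) * pnum a (n+2) + pnum a (n+1) = _
        rw [ih1, ih1']; rfl
      · show (a (n+2) : ℕ) * qden a (n+2) + qden a (n+1) = _
        rw [ih2, ih2']
        show _ = (a 0 : ℕ) * ((a (n+2):ℕ) * qden _ (n+1) + qden _ n)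
            + ((a (n+2):ℕ) * pnum _ (n+1) + pnum _ n)
        ring

lemma cfVal_eq_one_div (a : ℕ → ℕ+) :
    cfVal a = 1 / ((a 0 : ℝ) + cfVal (fun j => a (j+1))) := by
  set b := fun j => a (j+1) with hb
  have hT0 : 0 ≤ cfVal b := cfVal_nonneg b
  have hden : (0:ℝ) < (a 0 : ℝ) + cfVal b := by
    have : (1:ℝ) ≤ (a 0 : ℝ) := by exact_mod_cast (a 0).pos
    linarith
  have hconv : ∀ n, conv a (n+1) = 1 / ((a 0 : ℝ) + conv b n) := by
    intro n
    obtain ⟨h1, h2⟩ := tail_pq a n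
    have hq : (0:ℝ) < qden b n := by exact_mod_cast qden_pos b n
    have hd2 : (0:ℝ) < (a 0 : ℝ) + conv b n := by
      have : (1:ℝ) ≤ (a 0 : ℝ) := by exact_mod_cast (a 0).pos
      linarith [conv_nonneg b n]
    rw [conv, h1, h2]
    rw [eq_div_iff (ne_of_gt hd2)]
    push_cast
    unfold conv
    field_simp
    rw [← hb, div_eq_iff (by positivity)]; ring
  have h1 : Tendsto (fun n => conv a (n+1)) atTop (nhds (cfVal a)) :=
    (tendsto_conv a).comp (tendsto_add_atTop_nat 1)
  have h2 : Tendsto (fun n => 1 / ((a 0 : ℝ) + conv b n)) atTop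
      (nhds (1 / ((a 0 : ℝ) + cfVal b))) := by
    apply Tendsto.div tendsto_const_nhds
    · exact tendsto_const_nhds.add (tendsto_conv b)
    · exact ne_of_gt hden
  have : Tendsto (fun n => conv a (n+1)) atTop (nhds (1 / ((a 0 : ℝ) + cfVal b))) := by
    simpa only [hconv] using h2
  exact tendsto_nhds_unique h1 this

lemma cfVal_pos (a : ℕ → ℕ+) : 0 < cfVal a := by
  rw [cfVal_eq_one_div]
  have h1 : (1:ℝ) ≤ (a 0 : ℝ) := by exact_mod_cast (a 0).pos
  have h2 := cfVal_nonneg (fun j => a (j+1))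
  positivity

lemma cfVal_lt_one (a : ℕ → ℕ+) : cfVal a < 1 := by
  rw [cfVal_eq_one_div]
  have h1 : (1:ℝ) ≤ (a 0 : ℝ) := by exact_mod_cast (a 0).pos
  have h2 := cfVal_pos (fun j => a (j+1))
  rw [div_lt_one (by linarith)]
  linarith

lemma cfVal_head {a b : ℕ → ℕ+} (h : cfVal a = cfVal b) :
    a 0 = b 0 ∧ cfVal (fun j => a (j+1)) = cfVal (fun j => b (j+1)) := by
  have ha := cfVal_eq_one_div a
  have hb := cfVal_eq_one_div b
  set Ta := cfVal (fun j => a (j+1))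
  set Tb := cfVal (fun j => b (j+1))
  have hTa0 : 0 < Ta := cfVal_pos _
  have hTa1 : Ta < 1 := cfVal_lt_one _
  have hTb0 : 0 < Tb := cfVal_pos _
  have hTb1 : Tb < 1 := cfVal_lt_one _
  have hda : (0:ℝ) < (a 0 : ℝ) + Ta := by
    have : (1:ℝ) ≤ (a 0 : ℝ) := by exact_mod_cast (a 0).pos
    linarith
  have hdb : (0:ℝ) < (b 0 : ℝ) + Tb := by
    have : (1:ℝ) ≤ (b 0 : ℝ) := by exact_mod_cast (b 0).pos
    linarith
  have heq : (a 0 : ℝ) + Ta = (b 0 : ℝ) + Tb := by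
    have := h
    rw [ha, hb] at this
    field_simp at this
    linarith
  have hab : a 0 = b 0 := by
    have h1 : ((a 0 : ℕ) : ℝ) < ((b 0 : ℕ) : ℝ) + 1 := by linarith
    have h2 : ((b 0 : ℕ) : ℝ) < ((a 0 : ℕ) : ℝ) + 1 := by linarith
    have h1' : (a 0 : ℕ) < (b 0 : ℕ) + 1 := by exact_mod_cast h1
    have h2' : (b 0 : ℕ) < (a 0 : ℕ) + 1 := by exact_mod_cast h2
    have : (a 0 : ℕ) = (b 0 : ℕ) := by omega
    exact PNat.coe_injective this
  refine ⟨hab, ?_⟩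
  have : ((a 0 : ℕ) : ℝ) = ((b 0 : ℕ) : ℝ) := by exact_mod_cast congrArg (fun p : ℕ+ => (p : ℕ)) hab
  linarith [heq]

lemma cfVal_injective : Function.Injective cfVal := by
  have key : ∀ n (a b : ℕ → ℕ+), cfVal a = cfVal b → a n = b n := by
    intro n
    induction n with
    | zero => intro a b h; exact (cfVal_head h).1
    | succ n ih => intro a b h; exact ih _ _ (cfVal_head h).2
  intro a b h
  funext n
  exact key n a b h

lemma pq_congr {a b : ℕ → ℕ+} : ∀ n, (∀ j < n, a j = b j) →
    pnum a n = pnum b n ∧ qden a n = qden b n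
  | 0 => by intro _; simp [pnum, qden]
  | 1 => by intro h; simp [pnum, qden, h 0 Nat.one_pos]
  | (n+2) => by
      intro h
      obtain ⟨ih1, ih2⟩ := pq_congr (n+1) (fun j hj => h j (by omega))
      obtain ⟨ih1', ih2'⟩ := pq_congr n (fun j hj => h j (by omega))
      have ha : a (n+1) = b (n+1) := h (n+1) (by omega)
      constructor
      · show (a (n+1) : ℕ) * pnum a (n+1) + pnum a n = (b (n+1) : ℕ) * pnum b (n+1) + pnum b n
        rw [ha, ih1, ih1']
      · show (a (n+1) : ℕ) * qden a (n+1) + qden a n = (b (n+1) : ℕ) * qden b (n+1) + qden b n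
        rw [ha, ih2, ih2']

lemma conv_congr {a b : ℕ → ℕ+} {n : ℕ} (h : ∀ j < n, a j = b j) : conv a n = conv b n := by
  obtain ⟨h1, h2⟩ := pq_congr n h
  rw [conv, conv, h1, h2]

lemma abs_cfVal_sub_cfVal {a b : ℕ → ℕ+} {n : ℕ} (hn : 1 ≤ n) (h : ∀ j < n, a j = b j) :
    |cfVal a - cfVal b| ≤ 2/(n:ℝ) := by
  have h1 := abs_cfVal_sub_conv a hn
  have h2 := abs_cfVal_sub_conv b hn
  have h3 := conv_congr h
  calc |cfVal a - cfVal b| = |(cfVal a - conv a n) - (cfVal b - conv b n)| := by rw [h3]; ring_nf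
    _ ≤ |cfVal a - conv a n| + |cfVal b - conv b n| := abs_sub _ _
    _ ≤ 1/(n:ℝ) + 1/(n:ℝ) := add_le_add h1 h2
    _ = 2/(n:ℝ) := by ring


/-! ### Gauss map, existence of expansions -/

def Gd : Set ℝ := {x | x ∈ Set.Ioo (0:ℝ) 1 ∧ Irrational x}

noncomputable def gauss (x : ℝ) : ℝ := Int.fract (1/x)

noncomputable def gc (x : ℝ) (n : ℕ) : ℕ+ :=
  ⟨max 1 (⌊1/(gauss^[n] x)⌋).toNat, Nat.le_max_left _ _⟩

lemma gauss_mem {x : ℝ} (hx : x ∈ Gd) : gauss x ∈ Gd := by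
  obtain ⟨⟨hx0, hx1⟩, hirr⟩ := hx
  have hinv : Irrational (1/x) := by rw [one_div]; exact hirr.inv
  have hfr : Irrational (Int.fract (1/x)) := hinv.sub_intCast ⌊1/x⌋
  refine ⟨⟨?_, Int.fract_lt_one _⟩, hfr⟩
  exact Int.fract_pos.mpr (fun h => hinv.ne_int ⌊1/x⌋ h)

lemma gauss_iter_mem {x : ℝ} (hx : x ∈ Gd) (n : ℕ) : gauss^[n] x ∈ Gd := by
  induction n with
  | zero => simpa using hx
  | succ n ih => rw [Function.iterate_succ_apply']; exact gauss_mem ih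

lemma floor_one_div_pos {t : ℝ} (ht : t ∈ Gd) : 1 ≤ ⌊1/t⌋ := by
  obtain ⟨⟨h0, h1⟩, _⟩ := ht
  have : (1:ℝ) ≤ 1/t := by rw [le_div_iff₀ h0]; linarith
  exact Int.le_floor.mpr (by exact_mod_cast this)

lemma gc_eq_floor {x : ℝ} (hx : x ∈ Gd) (n : ℕ) :
    ((gc x n : ℕ) : ℤ) = ⌊1/(gauss^[n] x)⌋ := by
  have h := floor_one_div_pos (gauss_iter_mem hx n)
  have h1 : (⌊1/(gauss^[n] x)⌋).toNat = ⌊1/(gauss^[n] x)⌋ := Int.toNat_of_nonneg (by omega)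
  show ((max 1 (⌊1/(gauss^[n] x)⌋).toNat : ℕ) : ℤ) = _
  have h2 : 1 ≤ (⌊1/(gauss^[n] x)⌋).toNat := by omega
  rw [max_eq_right h2]
  exact h1

lemma gauss_step {x : ℝ} (hx : x ∈ Gd) (n : ℕ) :
    gauss^[n] x = 1 / ((gc x n : ℝ) + gauss^[n+1] x) := by
  set t := gauss^[n] x with htdef
  have hnext : gauss^[n+1] x = 1/t - (⌊1/t⌋ : ℝ) := by
    rw [Function.iterate_succ_apply', ← htdef]
    show Int.fract (1/t) = _
    rw [Int.fract]
  have hgc : ((gc x n : ℕ) : ℝ) = ((⌊1/t⌋ : ℤ) : ℝ) := by exact_mod_cast gc_eq_floor hx n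
  rw [hnext, hgc]
  have he : ((⌊1/t⌋ : ℤ) : ℝ) + (1/t - (⌊1/t⌋ : ℤ)) = 1/t := by ring
  rw [he, one_div_one_div]

/-- pure algebra helper -/
lemma alg_step (P p Q q A s : ℝ) (hAs : 0 < A + s) (hQ : 0 < Q) (hq : 0 < q) :
    ((A*P + p) + s*P) / ((A*Q + q) + s*Q) = (P + (1/(A+s))*p) / (Q + (1/(A+s))*q) := by
  have hD : (0:ℝ) < Q + (1/(A+s))*q := by positivity
  have hD2 : (0:ℝ) < (A*Q + q) + s*Q := by nlinarith
  rw [div_eq_div_iff (ne_of_gt hD2) (ne_of_gt hD)]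
  field_simp
  ring

lemma gd_conv_identity {x : ℝ} (hx : x ∈ Gd) : ∀ n,
    x = ((pnum (gc x) (n+1) : ℝ) + gauss^[n+1] x * pnum (gc x) n) /
        ((qden (gc x) (n+1) : ℝ) + gauss^[n+1] x * qden (gc x) n)
  | 0 => by
      have h := gauss_step hx 0
      simp only [Function.iterate_zero_apply] at h
      simp only [pnum, qden]
      push_cast
      conv_lhs => rw [h]
      have ht1 : gauss^[1] x ∈ Gd := gauss_iter_mem hx 1
      obtain ⟨⟨h10, h11⟩, _⟩ := ht1
      have hgc : (1:ℝ) ≤ ((gc x 0 : ℕ) : ℝ) := by exact_mod_cast (gc x 0).pos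
      rw [mul_zero, mul_one, add_zero]
  | (n+1) => by
      have ih := gd_conv_identity hx n
      have hstep := gauss_step hx (n+1)
      have hsmem : gauss^[n+2] x ∈ Gd := gauss_iter_mem hx (n+2)
      obtain ⟨⟨hs0, hs1⟩, _⟩ := hsmem
      have hA : (1:ℝ) ≤ ((gc x (n+1) : ℕ) : ℝ) := by exact_mod_cast (gc x (n+1)).pos
      have hq1 : (0:ℝ) < qden (gc x) (n+1) := by exact_mod_cast qden_pos (gc x) (n+1)
      have hq0 : (0:ℝ) < qden (gc x) n := by exact_mod_cast qden_pos (gc x) n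
      have hrec_p : (pnum (gc x) (n+2) : ℝ)
          = ((gc x (n+1) : ℕ) : ℝ) * pnum (gc x) (n+1) + pnum (gc x) n := by
        have : pnum (gc x) (n+2) = (gc x (n+1) : ℕ) * pnum (gc x) (n+1) + pnum (gc x) n := rfl
        rw [this]; push_cast; ring
      have hrec_q : (qden (gc x) (n+2) : ℝ)
          = ((gc x (n+1) : ℕ) : ℝ) * qden (gc x) (n+1) + qden (gc x) n := by
        have : qden (gc x) (n+2) = (gc x (n+1) : ℕ) * qden (gc x) (n+1) + qden (gc x) n := rfl
        rw [this]; push_cast; ring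
      rw [hrec_p, hrec_q]
      have key := alg_step (pnum (gc x) (n+1) : ℝ) (pnum (gc x) n : ℝ)
        (qden (gc x) (n+1) : ℝ) (qden (gc x) n : ℝ)
        ((gc x (n+1) : ℕ) : ℝ) (gauss^[n+2] x) (by linarith) hq1 hq0
      rw [key, ← hstep]
      exact ih

/-- pure algebra helper for the approximation bound -/
lemma alg_diff (P p Q q t : ℝ) (hQ : 0 < Q) (hq : 0 < q) (ht : 0 < t) :
    (P + t*p)/(Q + t*q) - P/Q = t*(p*Q - P*q) / (Q*(Q + t*q)) := by
  have hD : (0:ℝ) < Q + t*q := by positivity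
  field_simp
  ring

lemma abs_gd_sub_conv {x : ℝ} (hx : x ∈ Gd) (n : ℕ) :
    |x - conv (gc x) (n+1)| ≤ 1/((n:ℝ)+1)^2 := by
  have htmem : gauss^[n+1] x ∈ Gd := gauss_iter_mem hx (n+1)
  have hid := gd_conv_identity hx n
  set t := gauss^[n+1] x with htd
  set a := gc x with ha
  obtain ⟨⟨ht0, ht1⟩, _⟩ := htmem
  have hq1 : (0:ℝ) < qden a (n+1) := by exact_mod_cast qden_pos a (n+1)
  have hq0 : (0:ℝ) < qden a n := by exact_mod_cast qden_pos a n
  have hqn : ((n:ℝ)+1) ≤ qden a (n+1) := by exact_mod_cast le_qden a (n+1)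
  have hdet : (pnum a (n+1) : ℝ) * qden a n
      - (pnum a n : ℝ) * qden a (n+1) = (-1)^n := by
    exact_mod_cast det a n
  have hdiff := alg_diff (pnum a (n+1) : ℝ) (pnum a n : ℝ)
    (qden a (n+1) : ℝ) (qden a n : ℝ) t hq1 hq0 ht0
  rw [conv]
  rw [hid, hdiff]
  have hnum : (pnum a n : ℝ) * qden a (n+1)
      - (pnum a (n+1) : ℝ) * qden a n = -(-1)^n := by linarith
  rw [hnum, abs_div]
  have h1 : |t * (-(-1:ℝ)^n)| = t := by
    rw [abs_mul, abs_neg, abs_pow, abs_neg, abs_one, one_pow, mul_one, abs_of_pos ht0]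
  rw [h1, abs_of_pos (by positivity)]
  have hb : ((n:ℝ)+1)^2 ≤ (qden a (n+1) : ℝ)
      * ((qden a (n+1) : ℝ) + t * qden a n) := by nlinarith [mul_pos ht0 hq0]
  have hpos : (0:ℝ) < (qden a (n+1) : ℝ)
      * ((qden a (n+1) : ℝ) + t * qden a n) := by positivity
  calc t / ((qden a (n+1) : ℝ) * ((qden a (n+1) : ℝ) + t * qden a n))
      ≤ 1 / ((qden a (n+1) : ℝ) * ((qden a (n+1) : ℝ) + t * qden a n)) := by
        gcongr
    _ ≤ 1/((n:ℝ)+1)^2 := one_div_le_one_div_of_le (by positivity) hb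

lemma cfVal_gc {x : ℝ} (hx : x ∈ Gd) : cfVal (gc x) = x := by
  have h : Tendsto (fun n => conv (gc x) (n+1)) atTop (nhds x) := by
    rw [tendsto_iff_dist_tendsto_zero]
    have hb : ∀ n, dist (conv (gc x) (n+1)) x ≤ 1/((n:ℝ)+1)^2 := by
      intro n
      rw [Real.dist_eq, abs_sub_comm]
      exact abs_gd_sub_conv hx n
    apply squeeze_zero (fun n => dist_nonneg) hb
    have h2 : Tendsto (fun n : ℕ => ((n:ℝ)+1)^2) atTop atTop := by
      apply (tendsto_pow_atTop (two_ne_zero)).comp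
      exact tendsto_atTop_add_const_right atTop 1 tendsto_natCast_atTop_atTop
    simpa [Pi.inv_def] using h2.inv_tendsto_atTop
  have h2 : Tendsto (fun n => conv (gc x) (n+1)) atTop (nhds (cfVal (gc x))) :=
    (tendsto_conv (gc x)).comp (tendsto_add_atTop_nat 1)
  exact tendsto_nhds_unique h2 h


lemma coeff_eq {y : ℝ} {b : ℕ → ℕ+} (h : cfVal b = y) : coeff y = b := by
  have hex : ∃ a : ℕ → ℕ+, cfVal a = y := ⟨b, h⟩
  have h1 : cfVal (coeff y) = y := by
    unfold coeff
    rw [dif_pos hex]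
    exact hex.choose_spec
  exact cfVal_injective (h1.trans h.symm)

lemma gauss_local {t : ℝ} (ht : t ∈ Gd) {ε : ℝ} (hε : 0 < ε) :
    ∃ η > 0, ∀ s ∈ Gd, |s - t| < η → (⌊1/s⌋ = ⌊1/t⌋ ∧ |gauss s - gauss t| < ε) := by
  obtain ⟨⟨ht0, ht1⟩, htirr⟩ := ht
  have hinvirr : Irrational (1/t) := by rw [one_div]; exact htirr.inv
  set f := Int.fract (1/t) with hf
  have hf0 : 0 < f := Int.fract_pos.mpr (hinvirr.ne_int _)
  have hf1 : f < 1 := Int.fract_lt_one _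
  set η' := min (min f (1 - f)) ε with hη'
  have hη'0 : 0 < η' := by
    apply lt_min (lt_min hf0 (by linarith)) hε
  refine ⟨min (t/2) (η' * t^2 / 4), lt_min (by positivity) (by positivity), ?_⟩
  rintro s ⟨⟨hs0, hs1⟩, hsirr⟩ hdist
  have hd1 : |s - t| < t/2 := lt_of_lt_of_le hdist (min_le_left _ _)
  have hd2 : |s - t| < η' * t^2 / 4 := lt_of_lt_of_le hdist (min_le_right _ _)
  have hs_half : t/2 < s := by
    have := abs_lt.mp hd1
    linarith [this.1]
  have hst : t^2/2 < s * t := by nlinarith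
  have hkey : |1/s - 1/t| < η' := by
    have heq : 1/s - 1/t = (t - s)/(s*t) := by field_simp
    rw [heq, abs_div, abs_of_pos (by positivity : (0:ℝ) < s*t)]
    rw [div_lt_iff₀ (by positivity)]
    have h1 : |t - s| < η' * t^2/4 := by rw [abs_sub_comm]; exact hd2
    nlinarith
  have hfloor : ⌊1/s⌋ = ⌊1/t⌋ := by
    have hft : (⌊1/t⌋ : ℝ) = 1/t - f := by rw [hf, Int.fract]; ring
    rw [Int.floor_eq_iff]
    constructor
    · have hle : η' ≤ f := le_trans (min_le_left _ _) (min_le_left _ _)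
      have habs := abs_lt.mp hkey
      rw [hft]
      linarith [habs.1]
    · have hle : η' ≤ 1 - f := le_trans (min_le_left _ _) (min_le_right _ _)
      have h2 := abs_lt.mp hkey
      rw [hft]
      push_cast
      linarith [h2.2]
  refine ⟨hfloor, ?_⟩
  have hgs : gauss s - gauss t = 1/s - 1/t := by
    show Int.fract (1/s) - Int.fract (1/t) = _
    rw [Int.fract, Int.fract, hfloor]
    ring
  rw [hgs]
  exact lt_of_lt_of_le hkey (le_trans (min_le_right _ _) (le_refl _))

lemma gc_local (n : ℕ) : ∀ (x : ℝ), x ∈ Gd → ∀ ε > 0, ∃ δ > 0, ∀ y ∈ Gd, |y - x| < δ →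
    (∀ j < n, gc y j = gc x j) ∧ |gauss^[n] y - gauss^[n] x| < ε := by
  induction n with
  | zero =>
      intro x hx ε hε
      exact ⟨ε, hε, fun y hy hd => ⟨fun j hj => absurd hj (Nat.not_lt_zero j), by simpa using hd⟩⟩
  | succ n ih =>
      intro x hx ε hε
      have htmem := gauss_iter_mem hx n
      obtain ⟨η, hη, hstep⟩ := gauss_local htmem hε
      obtain ⟨δ, hδ, hind⟩ := ih x hx η hη
      refine ⟨δ, hδ, fun y hy hd => ?_⟩
      obtain ⟨hagree, hclose⟩ := hind y hy hd
      have hys := gauss_iter_mem hy n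
      obtain ⟨hfl, hgcl⟩ := hstep (gauss^[n] y) hys hclose
      constructor
      · intro j hj
        rcases Nat.lt_or_ge j n with h | h
        · exact hagree j h
        · have hjn : j = n := by omega
          subst hjn
          apply Subtype.ext
          show max 1 (⌊1/(gauss^[j] y)⌋).toNat = max 1 (⌊1/(gauss^[j] x)⌋).toNat
          rw [hfl]
      · rw [Function.iterate_succ_apply', Function.iterate_succ_apply']
        exact hgcl

lemma Iirr_sub_Gd : Iirr ⊆ Gd := by
  rintro x ⟨⟨h0, h1⟩, hirr⟩
  refine ⟨⟨?_, ?_⟩, hirr⟩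
  · rcases eq_or_lt_of_le h0 with h | h
    · exact absurd h.symm (by simpa using hirr.ne_int 0)
    · exact h
  · rcases eq_or_lt_of_le h1 with h | h
    · exact absurd h (by simpa using hirr.ne_int 1)
    · exact h

lemma continuousOn_cantorF1 : ContinuousOn cantorF1 Iirr := by
  rw [Metric.continuousOn_iff]
  intro x hxI ε hε
  have hxG : x ∈ Gd := Iirr_sub_Gd hxI
  obtain ⟨m, hm⟩ := exists_nat_gt (2/ε)
  have hm0 : (0:ℝ) < m := lt_of_le_of_lt (by positivity) hm
  have hm1 : 1 ≤ m := by exact_mod_cast Nat.one_le_iff_ne_zero.mpr (by rintro rfl; simp at hm0)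
  obtain ⟨δ, hδ, hloc⟩ := gc_local (2*m) x hxG 1 one_pos
  refine ⟨δ, hδ, fun y hyI hdist => ?_⟩
  have hyG : y ∈ Gd := Iirr_sub_Gd hyI
  rw [Real.dist_eq] at hdist
  obtain ⟨hagree, -⟩ := hloc y hyG hdist
  have hcy : coeff y = gc y := coeff_eq (cfVal_gc hyG)
  have hcx : coeff x = gc x := coeff_eq (cfVal_gc hxG)
  rw [Real.dist_eq, cantorF1, cantorF1, hcy, hcx]
  have hb : ∀ j < m, gc y (2*j) = gc x (2*j) := fun j hj => hagree (2*j) (by omega)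
  have := abs_cfVal_sub_cfVal hm1 hb
  calc |cfVal (fun j => gc y (2*j)) - cfVal (fun j => gc x (2*j))| ≤ 2/(m:ℝ) := this
    _ < ε := by rw [div_lt_iff₀ hm0]; rw [div_lt_iff₀ hε] at hm; linarith

lemma continuousOn_cantorF2 : ContinuousOn cantorF2 Iirr := by
  rw [Metric.continuousOn_iff]
  intro x hxI ε hε
  have hxG : x ∈ Gd := Iirr_sub_Gd hxI
  obtain ⟨m, hm⟩ := exists_nat_gt (2/ε)
  have hm0 : (0:ℝ) < m := lt_of_le_of_lt (by positivity) hm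
  have hm1 : 1 ≤ m := by exact_mod_cast Nat.one_le_iff_ne_zero.mpr (by rintro rfl; simp at hm0)
  obtain ⟨δ, hδ, hloc⟩ := gc_local (2*m+1) x hxG 1 one_pos
  refine ⟨δ, hδ, fun y hyI hdist => ?_⟩
  have hyG : y ∈ Gd := Iirr_sub_Gd hyI
  rw [Real.dist_eq] at hdist
  obtain ⟨hagree, -⟩ := hloc y hyG hdist
  have hcy : coeff y = gc y := coeff_eq (cfVal_gc hyG)
  have hcx : coeff x = gc x := coeff_eq (cfVal_gc hxG)
  rw [Real.dist_eq, cantorF2, cantorF2, hcy, hcx]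
  have hb : ∀ j < m, gc y (2*j+1) = gc x (2*j+1) := fun j hj => hagree (2*j+1) (by omega)
  have := abs_cfVal_sub_cfVal hm1 hb
  calc |cfVal (fun j => gc y (2*j+1)) - cfVal (fun j => gc x (2*j+1))| ≤ 2/(m:ℝ) := this
    _ < ε := by rw [div_lt_iff₀ hm0]; rw [div_lt_iff₀ hε] at hm; linarith

end CF

/-- For every `n ≥ 1` and `x ∈ I` with partial quotients `a`: `f₁` maps `I_n(x)` into
`I_m(f₁(x))` where `m = n/2` if `n` is even and `m = (n+1)/2` if `n` is odd (note that
`I_m(f₁(x)) = fundInt (fun j => a (2*j)) m`); consequently `f₁` is continuous on `I`.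
The same holds for `f₂` with `m = ⌊n/2⌋` when `⌊n/2⌋ ≥ 1`. -/
theorem cantorF_mapsTo_fundInt_and_continuousOn (n : ℕ) (hn : 1 ≤ n)
    (a : ℕ → ℕ+) (x : ℝ) (hx : x ∈ Iirr) (hxa : cfVal a = x) :
    Set.MapsTo cantorF1 (fundInt a n)
      (fundInt (fun j => a (2*j)) (if Even n then n / 2 else (n+1) / 2)) ∧
    (1 ≤ n / 2 →
      Set.MapsTo cantorF2 (fundInt a n) (fundInt (fun j => a (2*j+1)) (n / 2))) ∧
    ContinuousOn cantorF1 Iirr ∧ ContinuousOn cantorF2 Iirr := by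
  refine ⟨?_, ?_, CF.continuousOn_cantorF1, CF.continuousOn_cantorF2⟩
  · rintro y ⟨b, hb, hagree⟩
    have hcb : coeff y = b := CF.coeff_eq hb
    refine ⟨fun j => b (2*j), ?_, ?_⟩
    · rw [cantorF1, hcb]
    · intro j hj
      apply hagree
      rcases Nat.even_or_odd n with he | ho
      · rw [if_pos he] at hj
        obtain ⟨k, hk⟩ := he
        omega
      · rw [if_neg (Nat.not_even_iff_odd.mpr ho)] at hj
        obtain ⟨k, hk⟩ := ho
        omega
  · rintro hhalf y ⟨b, hb, hagree⟩
    have hcb : coeff y = b := CF.coeff_eq hb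
    refine ⟨fun j => b (2*j+1), ?_, ?_⟩
    · rw [cantorF2, hcb]
    · intro j hj
      apply hagree
      omega
end
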